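/- The set of indices of recursive well-founded trees on ℕ is Π¹₁-complete: it is Π¹₁, and every Π¹₁ subset of ℕ is many-one reducible to it. -/

import Mathlib

/-- A set `A ⊆ ℕ` is Π¹₁ if membership can be expressed by a single universal
second-order (function) quantifier followed by an arithmetical matrix; by
Kleene's normal form theorem the matrix may be taken computable. -/
def Pi11 (A : Set ℕ) : Prop :=
  ∃ R : ℕ → List ℕ → Bool, Computable₂ R ∧
    ∀ n, n ∈ A ↔ ∀ f : ℕ → ℕ, ∃ k, R n (List.ofFn fun i : Fin k => f i) = true

open Nat.Partrec (Code)

/-- The `e`-th partial computable function. -/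
def evalCode (e n : ℕ) : Part ℕ :=
  Nat.Partrec.Code.eval (Denumerable.ofNat Nat.Partrec.Code e) n

/-- `e` is an index of a recursive tree on ℕ: the `e`-th partial computable
function is total and decides (value `1` = membership) a set of finite
sequences closed under initial segments. -/
def IsTreeIndex (e : ℕ) : Prop :=
  (∀ s : List ℕ, (evalCode e (Encodable.encode s)).Dom) ∧
  (1 ∈ evalCode e (Encodable.encode ([] : List ℕ))) ∧
  (∀ s t : List ℕ, s <+: t → 1 ∈ evalCode e (Encodable.encode t) →
    1 ∈ evalCode e (Encodable.encode s))

/-- `e` is an index of a well-founded recursive tree: the tree it decides has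
no infinite branch. -/
def WFTreeIndex (e : ℕ) : Prop :=
  IsTreeIndex e ∧
  ∀ f : ℕ → ℕ, ∃ k : ℕ,
    ¬ 1 ∈ evalCode e (Encodable.encode (List.ofFn fun i : Fin k => f i))

open Nat.Partrec (Code)
open Nat.Partrec.Code Encodable Denumerable

def bany (n : ℕ) (p : ℕ → Bool) : Bool := Nat.rec false (fun t r => p t || r) n
def takeI (l : List ℕ) (j : ℕ) : List ℕ := Nat.rec [] (fun t r => r ++ [l.getI t]) j
def prefI (a b : List ℕ) : Bool := decide (a.length ≤ b.length) && decide (takeI b a.length = a)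

theorem Computable.bany' {α : Type} [Primcodable α] {n : α → ℕ} {p : α → ℕ → Bool}
    (hn : Computable n) (hp : Computable₂ p) :
    Computable fun a => bany (n a) (p a) :=
  Computable.nat_rec hn (Computable.const false)
    ((Primrec.or.to_comp.comp₂ (hp.comp Computable.fst (Computable.fst.comp Computable.snd)).to₂
      (Computable.snd.comp Computable.snd).to₂))

theorem Computable.takeI' {α : Type} [Primcodable α] {l : α → List ℕ} {j : α → ℕ}
    (hl : Computable l) (hj : Computable j) :
    Computable fun a => takeI (l a) (j a) :=
  Computable.nat_rec hj (Computable.const [])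
    ((Computable.list_append.comp (Computable.snd.comp Computable.snd)
      ((Computable.list_cons.comp
        ((Primrec.list_getI.to_comp).comp (hl.comp Computable.fst)
          (Computable.fst.comp Computable.snd))
        (Computable.const []))) ).to₂)

theorem Computable.prefI' {α : Type} [Primcodable α] {x y : α → List ℕ}
    (hx : Computable x) (hy : Computable y) :
    Computable fun a => prefI (x a) (y a) :=
  Primrec.and.to_comp.comp
    ((Primrec.nat_le.decide.to_comp).comp (Computable.list_length.comp hx)
      (Computable.list_length.comp hy))
    (Primrec.eq.decide.to_comp.comp
      (Computable.takeI' hy (Computable.list_length.comp hx)) hx)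

/-- arithmetical matrix for `IsTreeIndex` -/
def Pm (e m t : ℕ) : Bool :=
  (Code.evaln t (ofNat Code e) m).isSome &&
  decide (Code.evaln t (ofNat Code e) (encode ([] : List ℕ)) = some 1) &&
  (!(prefI (ofNat (List ℕ) m.unpair.1.unpair.1) (ofNat (List ℕ) m.unpair.1.unpair.2) &&
      decide (Code.evaln m.unpair.2 (ofNat Code e) (encode (ofNat (List ℕ) m.unpair.1.unpair.2))
        = some 1))
   || decide (Code.evaln t (ofNat Code e) (encode (ofNat (List ℕ) m.unpair.1.unpair.1)) = some 1))

/-- full Π¹₁ matrix for `WFTreeIndex` -/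
def Rm (e : ℕ) (σ : List ℕ) : Bool :=
  (!decide (σ = [])) &&
  bany σ.length (fun t => Pm e σ.headI t) &&
  bany σ.length (fun j => bany σ.length (fun t =>
    !decide ((Code.evaln t (ofNat Code e) (encode (takeI σ.tail j))).getD 1 = 1)))

section computability
open Computable

theorem evaln_comp {α : Type} [Primcodable α] {t e x : α → ℕ}
    (ht : Computable t) (he : Computable e) (hx : Computable x) :
    Computable fun a => Code.evaln (t a) (ofNat Code (e a)) (x a) :=
  primrec_evaln.to_comp.comp ((ht.pair ((Primrec.ofNat Code).to_comp.comp he)).pair hx)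

theorem Pm_comp {α : Type} [Primcodable α] {e m t : α → ℕ}
    (he : Computable e) (hm : Computable m) (ht : Computable t) :
    Computable fun a => Pm (e a) (m a) (t a) := by
  have u11 : Computable fun a => (m a).unpair.1.unpair.1 :=
    (Primrec.fst.comp (Primrec.unpair.comp (Primrec.fst.comp Primrec.unpair))).to_comp.comp hm
  have u12 : Computable fun a => (m a).unpair.1.unpair.2 :=
    (Primrec.snd.comp (Primrec.unpair.comp (Primrec.fst.comp Primrec.unpair))).to_comp.comp hm
  have u2 : Computable fun a => (m a).unpair.2 :=
    (Primrec.snd.comp Primrec.unpair).to_comp.comp hm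
  have S1 : Computable fun a => ofNat (List ℕ) (m a).unpair.1.unpair.1 :=
    (Primrec.ofNat (List ℕ)).to_comp.comp u11
  have S2 : Computable fun a => ofNat (List ℕ) (m a).unpair.1.unpair.2 :=
    (Primrec.ofNat (List ℕ)).to_comp.comp u12
  exact Primrec.and.to_comp.comp
    (Primrec.and.to_comp.comp
      (Primrec.option_isSome.to_comp.comp (evaln_comp ht he hm))
      (Primrec.eq.decide.to_comp.comp
        (evaln_comp ht he (const (encode ([] : List ℕ)))) (const (some 1))))
    (Primrec.or.to_comp.comp
      (Primrec.not.to_comp.comp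
        (Primrec.and.to_comp.comp
          (Computable.prefI' S1 S2)
          (Primrec.eq.decide.to_comp.comp
            (evaln_comp u2 he (Computable.encode.comp S2)) (const (some 1)))))
      (Primrec.eq.decide.to_comp.comp
        (evaln_comp ht he (Computable.encode.comp S1)) (const (some 1))))

set_option maxHeartbeats 1000000 in
theorem Rm_computable : Computable₂ Rm := by
  have E : Computable fun a : ℕ × List ℕ => a.1 := fst
  have S : Computable fun a : ℕ × List ℕ => a.2 := snd
  have L : Computable fun a : ℕ × List ℕ => a.2.length := list_length.comp S
  refine Primrec.and.to_comp.comp (Primrec.and.to_comp.comp ?c1 ?c2) ?c3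
  case c1 =>
    exact Primrec.not.to_comp.comp
      (Primrec.eq.decide.to_comp.comp snd (const ([] : List ℕ)))
  case c2 =>
    refine Computable.bany' L ?_
    exact Pm_comp (fst.comp fst) ((Primrec.list_headI).to_comp.comp (snd.comp fst)) snd
  case c3 =>
    refine Computable.bany' L ?_
    show Computable fun b : (ℕ × List ℕ) × ℕ => bany b.1.2.length _
    refine Computable.bany' (L.comp fst) ?_
    have hE : Computable fun a : ((ℕ × List ℕ) × ℕ) × ℕ => a.1.1.1 := fst.comp (fst.comp fst)
    have hσ : Computable fun a : ((ℕ × List ℕ) × ℕ) × ℕ => a.1.1.2 := snd.comp (fst.comp fst)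
    have hj : Computable fun a : ((ℕ × List ℕ) × ℕ) × ℕ => a.1.2 := snd.comp fst
    have ht : Computable fun a : ((ℕ × List ℕ) × ℕ) × ℕ => a.2 := snd
    exact Primrec.not.to_comp.comp (Primrec.eq.decide.to_comp.comp
      ((Primrec.option_getD.to_comp).comp
        (evaln_comp ht hE (Computable.encode.comp
          (Computable.takeI' ((Primrec.list_tail).to_comp.comp hσ) hj)))
        (const 1))
      (const 1))

end computability

/-! ### Prop characterizations -/

theorem bany_iff {n : ℕ} {p : ℕ → Bool} : bany n p = true ↔ ∃ t < n, p t = true := by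
  induction n with
  | zero => simp [bany]
  | succ m ih =>
    show (p m || bany m p) = true ↔ _
    simp only [Bool.or_eq_true, ih]
    constructor
    · rintro (h | ⟨t, ht, hp⟩)
      · exact ⟨m, Nat.lt_succ_self m, h⟩
      · exact ⟨t, ht.trans (Nat.lt_succ_self m), hp⟩
    · rintro ⟨t, ht, hp⟩
      rcases Nat.lt_succ_iff_lt_or_eq.1 ht with h | rfl
      · exact Or.inr ⟨t, h, hp⟩
      · exact Or.inl hp

theorem takeI_eq {l : List ℕ} {j : ℕ} (h : j ≤ l.length) : takeI l j = l.take j := by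
  induction j with
  | zero => simp [takeI]
  | succ m ih =>
    have hm : m < l.length := h
    show takeI l m ++ [l.getI m] = _
    rw [ih (Nat.le_of_lt hm), List.take_succ]
    congr 1
    simp [List.getElem?_eq_getElem hm, List.getI, List.getD, List.getElem?_eq_getElem hm]

theorem prefI_iff {a b : List ℕ} : prefI a b = true ↔ a <+: b := by
  constructor
  · intro h
    simp only [prefI, Bool.and_eq_true, decide_eq_true_eq] at h
    obtain ⟨h1, h2⟩ := h
    rw [takeI_eq h1] at h2
    exact h2 ▸ List.take_prefix _ _
  · intro h
    have h1 : a.length ≤ b.length := h.length_le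
    simp only [prefI, Bool.and_eq_true, decide_eq_true_eq]
    refine ⟨h1, ?_⟩
    rw [takeI_eq h1]
    exact (List.prefix_iff_eq_take.1 h).symm

theorem Pm_eq_true {e m t : ℕ} : Pm e m t = true ↔
    ((Code.evaln t (ofNat Code e) m).isSome ∧
     Code.evaln t (ofNat Code e) (encode ([] : List ℕ)) = some 1 ∧
     (((ofNat (List ℕ) m.unpair.1.unpair.1) <+: (ofNat (List ℕ) m.unpair.1.unpair.2) ∧
       Code.evaln m.unpair.2 (ofNat Code e) m.unpair.1.unpair.2 = some 1) →
      Code.evaln t (ofNat Code e) m.unpair.1.unpair.1 = some 1)) := by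
  simp only [Pm, Bool.and_eq_true, Bool.or_eq_true, Bool.not_eq_true', Bool.and_eq_false_iff,
    decide_eq_true_eq, decide_eq_false_iff_not, Bool.eq_false_iff, ne_eq, prefI_iff, Denumerable.encode_ofNat]
  tauto

theorem Rm_eq_true {e : ℕ} {σ : List ℕ} : Rm e σ = true ↔
    σ ≠ [] ∧ (∃ t < σ.length, Pm e σ.headI t = true) ∧
    (∃ j < σ.length, ∃ t < σ.length,
      (Code.evaln t (ofNat Code e) (encode (takeI σ.tail j))).getD 1 ≠ 1) := by
  simp only [Rm, Bool.and_eq_true, bany_iff, Bool.not_eq_true', decide_eq_false_iff_not,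
    decide_eq_true_eq, and_assoc]

theorem getD_ne_one {o : Option ℕ} : o.getD 1 ≠ 1 ↔ ∃ v, o = some v ∧ v ≠ 1 := by
  cases o <;> simp

/-! ### initial segments -/

def seg (f : ℕ → ℕ) (k : ℕ) : List ℕ := List.ofFn fun i : Fin k => f i

@[simp] theorem seg_length (f : ℕ → ℕ) (k : ℕ) : (seg f k).length = k := by simp [seg]

theorem seg_succ (f : ℕ → ℕ) (k : ℕ) :
    seg f (k + 1) = f 0 :: seg (fun i => f (i + 1)) k := by
  simp only [seg, List.ofFn_succ]
  rfl

theorem seg_ne_nil {f : ℕ → ℕ} {k : ℕ} (h : 0 < k) : seg f k ≠ [] := by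
  intro hc
  have := congrArg List.length hc
  simp at this
  omega

theorem seg_headI {f : ℕ → ℕ} {k : ℕ} (h : 0 < k) : (seg f k).headI = f 0 := by
  cases k with
  | zero => omega
  | succ m => rw [seg_succ]; rfl

theorem seg_tail (f : ℕ → ℕ) (k : ℕ) :
    (seg f (k + 1)).tail = seg (fun i => f (i + 1)) k := by
  rw [seg_succ]; rfl

theorem seg_take {f : ℕ → ℕ} {j k : ℕ} (h : j ≤ k) : (seg f k).take j = seg f j := by
  apply List.ext_getElem
  · simp [seg]; omega
  · intro i h1 h2
    simp only [seg] at *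
    simp only [List.getElem_take, List.getElem_ofFn]

theorem wf_iff (e : ℕ) :
    WFTreeIndex e ↔ ∀ f : ℕ → ℕ, ∃ k, Rm e (seg f k) = true := by
  constructor
  · rintro ⟨⟨hA, hB, hC⟩, hD⟩ f
    obtain ⟨v1, hv1⟩ := Part.dom_iff_mem.1 (hA (ofNat (List ℕ) (f 0)))
    rw [Denumerable.encode_ofNat] at hv1
    obtain ⟨t1, ht1⟩ := evaln_complete.1 hv1
    obtain ⟨t2, ht2⟩ := evaln_complete.1 hB
    have H3 : ∃ t3, ∀ t, t3 ≤ t →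
        (((ofNat (List ℕ) (f 0).unpair.1.unpair.1) <+: (ofNat (List ℕ) (f 0).unpair.1.unpair.2) ∧
          Code.evaln (f 0).unpair.2 (ofNat Code e) (f 0).unpair.1.unpair.2 = some 1) →
         Code.evaln t (ofNat Code e) (f 0).unpair.1.unpair.1 = some 1) := by
      by_cases h : (ofNat (List ℕ) (f 0).unpair.1.unpair.1) <+:
            (ofNat (List ℕ) (f 0).unpair.1.unpair.2) ∧
          Code.evaln (f 0).unpair.2 (ofNat Code e) (f 0).unpair.1.unpair.2 = some 1
      · have h1 : (1:ℕ) ∈ evalCode e (encode (ofNat (List ℕ) (f 0).unpair.1.unpair.2)) := by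
          rw [Denumerable.encode_ofNat]; exact evaln_sound (Option.mem_def.2 h.2)
        have h2 := hC _ _ h.1 h1
        rw [Denumerable.encode_ofNat] at h2
        obtain ⟨t3, ht3⟩ := evaln_complete.1 h2
        exact ⟨t3, fun t htt _ => Option.mem_def.1 (evaln_mono htt ht3)⟩
      · exact ⟨0, fun t _ hcon => absurd hcon h⟩
    obtain ⟨t3, ht3⟩ := H3
    obtain ⟨k0, hk0⟩ := hD (fun i => f (i + 1))
    obtain ⟨v4, hv4⟩ := Part.dom_iff_mem.1 (hA (seg (fun i => f (i + 1)) k0))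
    have hv4ne : v4 ≠ 1 := fun h => hk0 (h ▸ hv4)
    obtain ⟨t4, ht4⟩ := evaln_complete.1 hv4
    set T := t1 + t2 + t3 + t4 with hT
    refine ⟨T + k0 + 2, ?_⟩
    rw [Rm_eq_true]
    refine ⟨seg_ne_nil (by omega), ?_, ?_⟩
    · refine ⟨T, by rw [seg_length]; omega, ?_⟩
      rw [seg_headI (by omega), Pm_eq_true]
      refine ⟨?_, ?_, fun hh => ht3 T (by omega) hh⟩
      · exact Option.isSome_iff_exists.2 ⟨v1, Option.mem_def.1 (evaln_mono (by omega) ht1)⟩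
      · exact Option.mem_def.1 (evaln_mono (by omega : t2 ≤ T) ht2)
    · refine ⟨k0, by rw [seg_length]; omega, T, by rw [seg_length]; omega, ?_⟩
      have htail : (seg f (T + k0 + 2)).tail = seg (fun i => f (i + 1)) (T + k0 + 1) := by
        rw [show T + k0 + 2 = (T + k0 + 1) + 1 from rfl, seg_tail]
      rw [htail, takeI_eq (by rw [seg_length]; omega), seg_take (by omega), getD_ne_one]
      exact ⟨v4, Option.mem_def.1 (evaln_mono (by omega : t4 ≤ T) ht4), hv4ne⟩
  · intro h
    have hP : ∀ m : ℕ, ∃ t, Pm e m t = true := by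
      intro m
      obtain ⟨k, hk⟩ := h (fun _ => m)
      rw [Rm_eq_true] at hk
      obtain ⟨hne, ⟨t, _, hPm⟩, -⟩ := hk
      have hk0 : 0 < k := by
        rcases Nat.eq_zero_or_pos k with rfl | h' 
        · simp [seg] at hne
        · exact h'
      rw [seg_headI hk0] at hPm
      exact ⟨t, hPm⟩
    have hA : ∀ s : List ℕ, (evalCode e (encode s)).Dom := by
      intro s
      obtain ⟨t, hPm⟩ := hP (encode s)
      obtain ⟨v, hv⟩ := Option.isSome_iff_exists.1 (Pm_eq_true.1 hPm).1
      exact Part.dom_iff_mem.2 ⟨v, evaln_sound (Option.mem_def.2 hv)⟩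
    have hB : 1 ∈ evalCode e (encode ([] : List ℕ)) := by
      obtain ⟨t, hPm⟩ := hP 0
      exact evaln_sound (Option.mem_def.2 (Pm_eq_true.1 hPm).2.1)
    have hC : ∀ s t : List ℕ, s <+: t → 1 ∈ evalCode e (encode t) →
        1 ∈ evalCode e (encode s) := by
      intro s t hpre h1
      obtain ⟨u, hu⟩ := evaln_complete.1 h1
      obtain ⟨t', hPm⟩ := hP (Nat.pair (Nat.pair (encode s) (encode t)) u)
      have h3 := (Pm_eq_true.1 hPm).2.2
      simp only [Nat.unpair_pair, Denumerable.ofNat_encode] at h3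
      exact evaln_sound (Option.mem_def.2 (h3 ⟨hpre, Option.mem_def.1 hu⟩))
    refine ⟨⟨hA, hB, hC⟩, ?_⟩
    intro f
    obtain ⟨k, hk⟩ := h (fun i => Nat.casesOn i 0 f)
    rw [Rm_eq_true] at hk
    obtain ⟨hne, -, j, hj, t, ht, hval⟩ := hk
    have hk0 : 0 < k := by
      rcases Nat.eq_zero_or_pos k with rfl | h'
      · simp [seg] at hne
      · exact h'
    obtain ⟨k', rfl⟩ : ∃ k', k = k' + 1 := ⟨k - 1, by omega⟩
    rw [seg_length] at hj ht
    rw [seg_tail] at hval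
    rw [takeI_eq (by rw [seg_length]; omega), seg_take (by omega), getD_ne_one] at hval
    obtain ⟨v, hv, hvne⟩ := hval
    refine ⟨j, fun h1 => hvne ?_⟩
    have hv' : v ∈ evalCode e (encode
        (seg (fun i => (Nat.casesOn (i + 1) 0 f : ℕ)) j)) :=
      evaln_sound (Option.mem_def.2 hv)
    have heq : (seg (fun i => (Nat.casesOn (i + 1) 0 f : ℕ)) j) =
        (List.ofFn fun i : Fin j => f i) := rfl
    rw [heq] at hv'
    exact (Part.mem_unique h1 hv').symm

/-! ### Part 2: completeness -/

def Qm (R : ℕ → List ℕ → Bool) (n : ℕ) (σ : List ℕ) : Bool :=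
  bany (σ.length + 1) (fun j => R n (takeI σ j))

def treeval (R : ℕ → List ℕ → Bool) (m : ℕ) : ℕ :=
  cond ((!decide ((ofNat (List ℕ) m.unpair.2) = [])) &&
    Qm R m.unpair.1 (ofNat (List ℕ) m.unpair.2)) 0 1

theorem Qm_iff {R : ℕ → List ℕ → Bool} {n : ℕ} {σ : List ℕ} :
    Qm R n σ = true ↔ ∃ j ≤ σ.length, R n (σ.take j) = true := by
  simp only [Qm, bany_iff, Nat.lt_succ_iff]
  constructor
  · rintro ⟨j, hj, hR⟩; exact ⟨j, hj, by rwa [takeI_eq hj] at hR⟩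
  · rintro ⟨j, hj, hR⟩; exact ⟨j, hj, by rwa [takeI_eq hj]⟩

theorem Qm_mono {R : ℕ → List ℕ → Bool} {n : ℕ} {s t : List ℕ} (h : s <+: t)
    (hs : Qm R n s = true) : Qm R n t = true := by
  rw [Qm_iff] at hs ⊢
  obtain ⟨j, hj, hR⟩ := hs
  refine ⟨j, hj.trans h.length_le, ?_⟩
  rwa [List.prefix_iff_eq_take.1 h, List.take_take, min_eq_left hj] at hR

theorem treeval_computable {R : ℕ → List ℕ → Bool} (hR : Computable₂ R) :
    Computable (treeval R) := by
  have hσ : Computable fun m : ℕ => ofNat (List ℕ) m.unpair.2 :=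
    (Primrec.ofNat (List ℕ)).to_comp.comp
      ((Primrec.snd.comp Primrec.unpair).to_comp)
  have hn : Computable fun m : ℕ => m.unpair.1 :=
    (Primrec.fst.comp Primrec.unpair).to_comp
  have hQ : Computable fun m : ℕ => Qm R m.unpair.1 (ofNat (List ℕ) m.unpair.2) := by
    refine Computable.bany' (Primrec.succ.to_comp.comp (Computable.list_length.comp hσ)) ?_
    exact hR.comp (hn.comp Computable.fst)
      (Computable.takeI' (hσ.comp Computable.fst) Computable.snd)
  exact Computable.cond
    (Primrec.and.to_comp.comp
      (Primrec.not.to_comp.comp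
        (Primrec.eq.decide.to_comp.comp hσ (Computable.const ([] : List ℕ)))) hQ)
    (Computable.const 0) (Computable.const 1)

theorem treeval_eq {R : ℕ → List ℕ → Bool} (n : ℕ) (σ : List ℕ) :
    treeval R (Nat.pair n (encode σ)) = if σ ≠ [] ∧ Qm R n σ = true then 0 else 1 := by
  simp only [treeval, Nat.unpair_pair, Denumerable.ofNat_encode]
  by_cases h1 : σ = [] <;> by_cases h2 : Qm R n σ = true <;> simp [h1, h2]

theorem part2 {A : Set ℕ} (h : Pi11 A) :
    ∃ g : ℕ → ℕ, Computable g ∧ ∀ n, n ∈ A ↔ WFTreeIndex (g n) := by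
  obtain ⟨R, hR, hA⟩ := h
  obtain ⟨c, hc⟩ := Nat.Partrec.Code.exists_code.1
    (Partrec.nat_iff.1 (treeval_computable hR).partrec)
  obtain ⟨sm, hsm_comp, hsm⟩ := Nat.Partrec.Code.smn
  refine ⟨fun n => encode (sm c n), Computable.encode.comp
    (hsm_comp.comp (Computable.const c) Computable.id), fun n => ?_⟩
  have hg : ∀ x : ℕ, evalCode (encode (sm c n)) x =
      Part.some (treeval R (Nat.pair n x)) := by
    intro x
    show Code.eval (ofNat Code (encode (sm c n))) x = _
    rw [Denumerable.ofNat_encode, hsm, hc]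
    rfl
  constructor
  · intro hn
    refine ⟨⟨?_, ?_, ?_⟩, ?_⟩
    · intro s; rw [hg]; trivial
    · rw [hg, treeval_eq]; simp
    · intro s t hpre h1
      rw [hg, treeval_eq] at h1 ⊢
      have h1' : ¬(t ≠ [] ∧ Qm R n t = true) := by
        intro hcon
        rw [if_pos hcon] at h1
        simp at h1
      rw [if_neg]
      · simp
      · rintro ⟨hs1, hs2⟩
        rcases not_and_or.1 h1' with h | h
        · push_neg at h
          exact hs1 (List.prefix_nil.1 (h ▸ hpre))
        · exact h (Qm_mono hpre hs2)
    · intro f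
      obtain ⟨k0, hk0⟩ := (hA n).1 hn f
      refine ⟨k0 + 1, ?_⟩
      rw [hg, treeval_eq, if_pos, Part.mem_some_iff]
      · simp
      · constructor
        · show (seg f (k0 + 1)) ≠ []
          exact seg_ne_nil (by omega)
        · rw [Qm_iff]
          refine ⟨k0, by rw [show ((List.ofFn fun i : Fin (k0+1) => f i)) = seg f (k0+1) from rfl, seg_length]; omega, ?_⟩
          rw [show ((List.ofFn fun i : Fin (k0+1) => f i)) = seg f (k0+1) from rfl,
            seg_take (by omega)]
          exact hk0
  · rintro ⟨-, hwf⟩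
    rw [hA]
    intro f
    obtain ⟨k, hk⟩ := hwf f
    rw [hg, treeval_eq] at hk
    by_cases hcon : (List.ofFn fun i : Fin k => f i) ≠ [] ∧
        Qm R n (List.ofFn fun i : Fin k => f i) = true
    · obtain ⟨-, hq⟩ := hcon
      rw [Qm_iff] at hq
      obtain ⟨j, hj, hRj⟩ := hq
      rw [show ((List.ofFn fun i : Fin k => f i)) = seg f k from rfl] at hRj hj
      rw [seg_length] at hj
      rw [seg_take hj] at hRj
      exact ⟨j, hRj⟩
    · rw [if_neg hcon] at hk
      simp at hk

/-- The set of indices of recursive well-founded trees on ℕ is Π¹₁-complete: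
it is Π¹₁, and every Π¹₁ subset of ℕ is many-one reducible to it. -/
theorem wfTree_pi11_complete :
    Pi11 {e | WFTreeIndex e} ∧
    ∀ A : Set ℕ, Pi11 A →
      ∃ g : ℕ → ℕ, Computable g ∧ ∀ n, n ∈ A ↔ WFTreeIndex (g n) :=
  ⟨⟨Rm, Rm_computable, fun n => wf_iff n⟩, fun _ hA => part2 hA⟩
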